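/- Let Z_n := S_n − G_n where S_n is a random walk with i.i.d. increments and G_n its centre of mass. Then Z_{n+1} = (n/(n+1))·∑_{i=1}^n (i/n)·X_{i+1}, and consequently Z_{n+1} has the same distribution as (n/(n+1))·G_n. -/

import Mathlib

open MeasureTheory ProbabilityTheory Finset

/-- Reindexing a sum over `Icc 1 N` as a sum over `range N`. -/
lemma sum_Icc_one_eq_sum_range {M : Type*} [AddCommMonoid M] (f : ℕ → M) (N : ℕ) :
    ∑ j ∈ Finset.Icc 1 N, f j = ∑ i ∈ Finset.range N, f (i + 1) := by
  rw [← Finset.Ico_add_one_right_eq_Icc, Finset.sum_Ico_eq_sum_range]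
  exact Finset.sum_congr rfl fun i _ => by rw [Nat.add_comm]


/-- The joint law of finitely many distinct coordinates of an i.i.d. family is the
product of copies of the common marginal law. -/
lemma iid_joint_law {Ω : Type*} [MeasureSpace Ω] [IsProbabilityMeasure (ℙ : Measure Ω)]
    {E : Type*} {mE : MeasurableSpace E} (X : ℕ → Ω → E)
    (hmeas : ∀ i, Measurable (X i))
    (hindep : iIndepFun X ℙ)
    (hident : ∀ i, IdentDistrib (X i) (X 1) ℙ ℙ)
    {n : ℕ} (m : Fin n → ℕ) (hm : Function.Injective m) :
    Measure.map (fun ω (k : Fin n) => X (m k) ω) ℙ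
      = Measure.pi (fun _ : Fin n => Measure.map (X 1) ℙ) := by
  classical
  have hprob : IsProbabilityMeasure (Measure.map (X 1) ℙ) :=
    Measure.isProbabilityMeasure_map (hmeas 1).aemeasurable
  refine (Measure.pi_eq fun s hs => ?_).symm
  set t : ℕ → Set E := fun j => if h : ∃ k, m k = j then s h.choose else Set.univ with ht
  have htm : ∀ k, t (m k) = s k := by
    intro k
    have h : ∃ k', m k' = m k := ⟨k, rfl⟩
    simp only [t, dif_pos h]
    exact congrArg s (hm h.choose_spec)
  have hts : ∀ j, MeasurableSet (t j) := by
    intro j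
    simp only [t]
    split
    · exact hs _
    · exact MeasurableSet.univ
  have hmeas_pi : Measurable fun ω (k : Fin n) => X (m k) ω :=
    measurable_pi_lambda _ fun k => hmeas (m k)
  rw [Measure.map_apply hmeas_pi (MeasurableSet.univ_pi hs)]
  have hpre : (fun ω (k : Fin n) => X (m k) ω) ⁻¹' Set.pi Set.univ s
      = ⋂ j ∈ (Finset.univ.image m : Finset ℕ), X j ⁻¹' t j := by
    ext ω
    simp only [Set.mem_preimage, Set.mem_pi, Set.mem_univ, forall_true_left, Set.mem_iInter]
    constructor
    · intro h j hj
      obtain ⟨k, -, rfl⟩ := Finset.mem_image.mp hj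
      rw [htm k]
      exact h k
    · intro h k
      have := h (m k) (Finset.mem_image_of_mem m (Finset.mem_univ k))
      rwa [htm k] at this
  rw [hpre, hindep.measure_inter_preimage_eq_mul _ (fun j _ => hts j),
    Finset.prod_image (fun a _ b _ hab => hm hab)]
  refine Finset.prod_congr rfl fun k _ => ?_
  rw [htm k, ← (hident (m k)).map_eq, Measure.map_apply (hmeas (m k)) (hs k)]

/-- With `Z n = S n − G n`, one has `Z (n+1) = (n/(n+1)) • ∑_{i=1}^n (i/n) • X_{i+1}`,
and consequently `Z (n+1)` has the same distribution as `(n/(n+1)) • G n`. -/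
theorem Z_representation_and_identDistrib {Ω : Type*} [MeasureSpace Ω]
    [IsProbabilityMeasure (ℙ : Measure Ω)] {d : ℕ}
    (X : ℕ → Ω → EuclideanSpace ℝ (Fin d))
    (hmeas : ∀ i, Measurable (X i))
    (hindep : iIndepFun X ℙ)
    (hident : ∀ i, IdentDistrib (X i) (X 1) ℙ ℙ)
    (S G Z : ℕ → Ω → EuclideanSpace ℝ (Fin d))
    (hS : ∀ n ω, S n ω = ∑ i ∈ Finset.Icc 1 n, X i ω)
    (hG : ∀ n ω, G n ω = ((n : ℝ))⁻¹ • ∑ i ∈ Finset.Icc 1 n, S i ω)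
    (hZ : ∀ n ω, Z n ω = S n ω - G n ω)
    (n : ℕ) (hn : 1 ≤ n) :
    (∀ ω, Z (n + 1) ω
        = ((n : ℝ) / (n + 1)) • ∑ i ∈ Finset.Icc 1 n, ((i : ℝ) / n) • X (i + 1) ω)
    ∧ IdentDistrib (Z (n + 1)) (fun ω => ((n : ℝ) / (n + 1)) • G n ω) ℙ ℙ := by
  classical
  have hn0 : (n : ℝ) ≠ 0 := Nat.cast_ne_zero.mpr (by omega)
  have hn1 : (n : ℝ) + 1 ≠ 0 := by positivity
  -- sum of the partial sums
  have sumS : ∀ (N : ℕ) (ω : Ω), ∑ i ∈ Finset.Icc 1 N, S i ω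
      = ∑ j ∈ Finset.Icc 1 N, (N + 1 - j) • X j ω := by
    intro N ω
    have h1 : ∑ i ∈ Finset.Icc 1 N, S i ω
        = ∑ i ∈ Finset.Icc 1 N, ∑ j ∈ Finset.Icc 1 i, X j ω := by
      exact Finset.sum_congr rfl fun i _ => hS i ω
    rw [h1, Finset.sum_comm' (s' := fun j => Finset.Icc j N) (t' := Finset.Icc 1 N)
      (by intro i j; simp only [Finset.mem_Icc]; omega)]
    refine Finset.sum_congr rfl fun j hj => ?_
    rw [Finset.sum_const, Nat.card_Icc]
  -- the canonical representation of Z (n+1)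
  have key1 : ∀ ω, Z (n + 1) ω
      = ∑ j ∈ Finset.Icc 1 (n + 1), (((j - 1 : ℕ) : ℝ) / ((n : ℝ) + 1)) • X j ω := by
    intro ω
    rw [hZ, hG, hS, sumS, Finset.smul_sum, ← Finset.sum_sub_distrib]
    refine Finset.sum_congr rfl fun j hj => ?_
    simp only [Finset.mem_Icc] at hj
    rw [← Nat.cast_smul_eq_nsmul ℝ (n + 1 + 1 - j), smul_smul]
    nth_rewrite 1 [← one_smul ℝ (X j ω)]
    rw [← sub_smul]
    · congr 1
      have h2 : ((n + 1 + 1 - j : ℕ) : ℝ) = (n : ℝ) + 2 - j := by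
        have hj2 : j ≤ n + 1 + 1 := by omega
        push_cast [Nat.cast_sub hj2]
        ring
      have h3 : ((j - 1 : ℕ) : ℝ) = (j : ℝ) - 1 := by
        push_cast [Nat.cast_sub hj.1]
        ring
      rw [h2, h3]
      push_cast
      field_simp
      ring
  -- first conjunct
  have conj1 : ∀ ω, Z (n + 1) ω
      = ((n : ℝ) / (n + 1)) • ∑ i ∈ Finset.Icc 1 n, ((i : ℝ) / n) • X (i + 1) ω := by
    intro ω
    rw [key1, sum_Icc_one_eq_sum_range, sum_Icc_one_eq_sum_range, Finset.sum_range_succ',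
      Finset.smul_sum]
    simp only [Nat.add_sub_cancel, Nat.sub_self, Nat.cast_zero, zero_div, zero_smul, add_zero]
    refine Finset.sum_congr rfl fun i _ => ?_
    rw [smul_smul]
    congr 1
    push_cast
    field_simp
  refine ⟨conj1, ?_⟩
  -- now the distributional identity
  set c : Fin n → ℝ := fun k => (((k : ℕ) : ℝ) + 1) / ((n : ℝ) + 1) with hc
  set L : (Fin n → EuclideanSpace ℝ (Fin d)) → EuclideanSpace ℝ (Fin d) :=
    fun v => ∑ k, c k • v k with hLdef
  have hL : Measurable L :=
    Finset.measurable_sum _ fun k _ => (measurable_pi_apply k).const_smul (c k)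
  have hY1 : ∀ ω, Z (n + 1) ω = L (fun k => X ((k : ℕ) + 2) ω) := by
    intro ω
    have hLs : L (fun k => X ((k : ℕ) + 2) ω)
        = ∑ i ∈ Finset.range n, (((i : ℝ) + 1) / ((n : ℝ) + 1)) • X (i + 2) ω := by
      simp only [hLdef, hc]
      exact Fin.sum_univ_eq_sum_range
        (fun i : ℕ => (((i : ℝ) + 1) / ((n : ℝ) + 1)) • X (i + 2) ω) n
    rw [hLs, conj1, sum_Icc_one_eq_sum_range, Finset.smul_sum]
    refine Finset.sum_congr rfl fun i _ => ?_
    rw [smul_smul]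
    congr 1
    push_cast
    field_simp
  have hY2 : ∀ ω, ((n : ℝ) / ((n : ℝ) + 1)) • G n ω = L (fun k => X (n - (k : ℕ)) ω) := by
    intro ω
    have hLs : L (fun k => X (n - (k : ℕ)) ω)
        = ∑ i ∈ Finset.range n, (((i : ℝ) + 1) / ((n : ℝ) + 1)) • X (n - i) ω := by
      simp only [hLdef, hc]
      exact Fin.sum_univ_eq_sum_range
        (fun i : ℕ => (((i : ℝ) + 1) / ((n : ℝ) + 1)) • X (n - i) ω) n
    rw [hLs, ← Finset.sum_range_reflect
      (fun i => (((i : ℝ) + 1) / ((n : ℝ) + 1)) • X (n - i) ω) n]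
    rw [hG, sumS, sum_Icc_one_eq_sum_range, Finset.smul_sum, Finset.smul_sum]
    refine Finset.sum_congr rfl fun i hi => ?_
    simp only [Finset.mem_range] at hi
    rw [← Nat.cast_smul_eq_nsmul ℝ (n + 1 - (i + 1)), smul_smul, smul_smul]
    have h4 : n - (n - 1 - i) = i + 1 := by omega
    have h5 : ((n - 1 - i : ℕ) : ℝ) + 1 = ((n - i : ℕ) : ℝ) := by
      have : (n - 1 - i) + 1 = n - i := by omega
      exact_mod_cast congrArg (Nat.cast : ℕ → ℝ) this
    have h6 : ((n + 1 - (i + 1) : ℕ) : ℝ) = ((n - i : ℕ) : ℝ) := by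
      congr 1
      omega
    rw [h4, h5, h6]
    congr 1
    field_simp
  have hinj1 : Function.Injective (fun k : Fin n => (k : ℕ) + 2) := by
    intro a b hab
    have hab' : (a : ℕ) + 2 = (b : ℕ) + 2 := hab
    exact Fin.ext (by omega)
  have hinj2 : Function.Injective (fun k : Fin n => n - (k : ℕ)) := by
    intro a b hab
    have ha := a.isLt
    have hb := b.isLt
    have hab' : n - (a : ℕ) = n - (b : ℕ) := hab
    exact Fin.ext (by omega)
  have law1 := iid_joint_law X hmeas hindep hident _ hinj1
  have law2 := iid_joint_law X hmeas hindep hident _ hinj2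
  have hmY1 : Measurable fun ω (k : Fin n) => X ((k : ℕ) + 2) ω :=
    measurable_pi_lambda _ fun k => hmeas _
  have hmY2 : Measurable fun ω (k : Fin n) => X (n - (k : ℕ)) ω :=
    measurable_pi_lambda _ fun k => hmeas _
  have e1 : Z (n + 1) = L ∘ fun ω (k : Fin n) => X ((k : ℕ) + 2) ω := funext hY1
  have e2 : (fun ω => ((n : ℝ) / ((n : ℝ) + 1)) • G n ω)
      = L ∘ fun ω (k : Fin n) => X (n - (k : ℕ)) ω := funext hY2
  have hgoal : IdentDistrib (L ∘ fun ω (k : Fin n) => X ((k : ℕ) + 2) ω)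
      (L ∘ fun ω (k : Fin n) => X (n - (k : ℕ)) ω) ℙ ℙ :=
    ⟨(hL.comp hmY1).aemeasurable, (hL.comp hmY2).aemeasurable, by
      rw [← Measure.map_map hL hmY1, ← Measure.map_map hL hmY2, law1, law2]⟩
  rw [e1, e2]
  exact hgoal
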